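/- Let A be an n×n real matrix such that A + Aᵀ is negative definite, and let p_1,…,p_{n−1} ≥ 0. Then the associated semidefinite program has an optimal solution M₀ with rank(M₀) ≤ ⌊(√(8n+1) − 1)/2⌋; that is, there exists M₀ ⪰ 0 with ⟨A_i, M₀⟩ = −p_i for i = 1,…,n−1, rank(M₀) ≤ ⌊(√(8n+1) − 1)/2⌋, and ⟨A_n, M₀⟩ ≥ ⟨A_n, M⟩ for every feasible M. -/

import Mathlib

open Matrix

/-- Trace inner product on square matrices: ⟨X, Y⟩ = tr(XY). -/
noncomputable def ip {m : ℕ} (X Y : Matrix (Fin m) (Fin m) ℝ) : ℝ := (X * Y).trace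

/-- For an m×m matrix `A`, the symmetric matrix `A_i = e_i a_iᵀ + a_i e_iᵀ`,
whose i-th row and column equal the i-th row of `A` (with (i,i) entry `2 A i i`),
all other entries zero. -/
noncomputable def sdpMat {m : ℕ} (A : Matrix (Fin m) (Fin m) ℝ) (i : Fin m) :
    Matrix (Fin m) (Fin m) ℝ :=
  Matrix.of fun k l => (if k = i then A i l else 0) + (if l = i then A i k else 0)

/-- Feasibility for the semidefinite program associated to an (n+1)×(n+1) matrix `A`
and data `p`: `M ⪰ 0` and `⟨A_i, M⟩ = -p_i` for every non-final index `i`. -/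
def Feasible {n : ℕ} (A : Matrix (Fin (n + 1)) (Fin (n + 1)) ℝ)
    (p : Fin (n + 1) → ℝ) (M : Matrix (Fin (n + 1)) (Fin (n + 1)) ℝ) : Prop :=
  M.PosSemidef ∧ ∀ i : Fin (n + 1), i ≠ Fin.last n → ip (sdpMat A i) M = -(p i)

section IpLemmas

variable {m : ℕ}

lemma ip_eq_sum (X M : Matrix (Fin m) (Fin m) ℝ) :
    ip X M = ∑ k, ∑ l, X k l * M l k := by
  simp [ip, Matrix.trace, Matrix.mul_apply, Matrix.diag]

lemma ip_add_right (X M N : Matrix (Fin m) (Fin m) ℝ) :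
    ip X (M + N) = ip X M + ip X N := by
  simp [ip, Matrix.mul_add]

lemma ip_smul_right (X M : Matrix (Fin m) (Fin m) ℝ) (t : ℝ) :
    ip X (t • M) = t * ip X M := by
  simp [ip, Matrix.mul_smul, Matrix.trace_smul]

lemma ip_neg_right (X M : Matrix (Fin m) (Fin m) ℝ) :
    ip X (-M) = -ip X M := by
  simp [ip]

lemma ip_sdpMat (A : Matrix (Fin m) (Fin m) ℝ) (i : Fin m) (M : Matrix (Fin m) (Fin m) ℝ) :
    ip (sdpMat A i) M = (∑ l, A i l * M l i) + (∑ k, A i k * M i k) := by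
  rw [ip_eq_sum]
  have : ∀ k l, (sdpMat A i) k l * M l k
      = (if k = i then A i l * M l i else 0) + (if l = i then A i k * M i k else 0) := by
    intro k l
    simp only [sdpMat, Matrix.of_apply]
    rcases eq_or_ne k i with hk | hk <;> rcases eq_or_ne l i with hl | hl <;>
      simp [hk, hl] <;> ring
  simp only [this, Finset.sum_add_distrib]
  congr 1
  · rw [Finset.sum_comm]
    simp
  · simp

lemma ip_sdpMat_symm (A : Matrix (Fin m) (Fin m) ℝ) (i : Fin m)
    {M : Matrix (Fin m) (Fin m) ℝ} (hM : Mᵀ = M) :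
    ip (sdpMat A i) M = 2 * ∑ l, A i l * M l i := by
  rw [ip_sdpMat]
  have : ∀ k, M i k = M k i := fun k => (congrFun (congrFun hM i) k).symm
  simp only [this]
  ring

lemma sum_ip_sdpMat (A : Matrix (Fin m) (Fin m) ℝ)
    {M : Matrix (Fin m) (Fin m) ℝ} (hM : Mᵀ = M) :
    ∑ i, ip (sdpMat A i) M = ip (A + Aᵀ) M := by
  have h1 : ip (A + Aᵀ) M = ∑ k, ∑ l, (A k l + A l k) * M l k := by
    rw [ip_eq_sum]; simp [Matrix.add_apply, Matrix.transpose_apply]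
  have h2 : ∀ i, ip (sdpMat A i) M = 2 * ∑ l, A i l * M l i := fun i => ip_sdpMat_symm A i hM
  simp only [h2, h1]
  have hsymm : ∀ k l, M k l = M l k := fun k l => (congrFun (congrFun hM k) l).symm
  have key : ∑ k, ∑ l, A l k * M l k = ∑ k, ∑ l, A k l * M l k := by
    rw [Finset.sum_comm]
    exact Finset.sum_congr rfl fun k _ => Finset.sum_congr rfl fun l _ => by rw [hsymm l k]
  simp only [two_mul, add_mul, Finset.sum_add_distrib, key]

end IpLemmas



section Quad
variable {r : ℕ}

lemma star_eq_transpose' (U : Matrix (Fin r) (Fin r) ℝ) : star U = Uᵀ := by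
  ext i j; simp [Matrix.star_apply]

lemma quad_lower_bound {T : Matrix (Fin r) (Fin r) ℝ} (hT : T.IsHermitian) {c : ℝ}
    (hc : ∀ i, c ≤ hT.eigenvalues i) (x : Fin r → ℝ) :
    c * (x ⬝ᵥ x) ≤ x ⬝ᵥ (T *ᵥ x) := by
  set U : Matrix (Fin r) (Fin r) ℝ := (hT.eigenvectorUnitary : Matrix (Fin r) (Fin r) ℝ) with hUdef
  have hU1 : U * Uᵀ = 1 := by
    rw [← star_eq_transpose']
    exact (Matrix.mem_unitaryGroup_iff).mp hT.eigenvectorUnitary.2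
  have hU2 : Uᵀ * U = 1 := by
    rw [← star_eq_transpose']
    exact (Matrix.mem_unitaryGroup_iff').mp hT.eigenvectorUnitary.2
  set y : Fin r → ℝ := Uᵀ *ᵥ x with hy
  have hyy : y ⬝ᵥ y = x ⬝ᵥ x := by
    rw [hy, dotProduct_mulVec, vecMul_transpose, mulVec_mulVec, hU1, one_mulVec]
  have hspec : T = U * diagonal (RCLike.ofReal ∘ hT.eigenvalues) * Uᵀ := by
    rw [← star_eq_transpose']; exact hT.spectral_theorem
  have hofReal : diagonal (RCLike.ofReal ∘ hT.eigenvalues) = diagonal hT.eigenvalues := by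
    congr 1
  have hquad : x ⬝ᵥ (T *ᵥ x) = ∑ i, hT.eigenvalues i * (y i * y i) := by
    conv_lhs => rw [hspec, hofReal, ← mulVec_mulVec, ← mulVec_mulVec, dotProduct_mulVec,
      ← mulVec_transpose, ← hy]
    simp [dotProduct, mulVec_diagonal]
    exact Finset.sum_congr rfl fun i _ => by ring
  calc c * (x ⬝ᵥ x) = ∑ i, c * (y i * y i) := by
        rw [← hyy]; simp [dotProduct, Finset.mul_sum]
    _ ≤ ∑ i, hT.eigenvalues i * (y i * y i) := by
        refine Finset.sum_le_sum fun i _ => ?_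
        exact mul_le_mul_of_nonneg_right (hc i) (mul_self_nonneg _)
    _ = x ⬝ᵥ (T *ᵥ x) := hquad.symm
end Quad

lemma perturb {r : ℕ} {T : Matrix (Fin r) (Fin r) ℝ} (hT : T.IsHermitian)
    {x₀ : Fin r → ℝ} (hneg : x₀ ⬝ᵥ (T *ᵥ x₀) < 0) :
    ∃ t : ℝ, 0 < t ∧ (1 + t • T).PosSemidef ∧ (1 + t • T).rank < r := by
  have hr : 0 < r := by
    rcases Nat.eq_zero_or_pos r with h | h
    · subst h; simp [dotProduct] at hneg
    · exact h
  haveI : Nonempty (Fin r) := Fin.pos_iff_nonempty.mp hr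
  have hne : (Finset.univ : Finset (Fin r)).Nonempty := Finset.univ_nonempty
  set μ : ℝ := Finset.univ.inf' hne hT.eigenvalues with hμdef
  have hc : ∀ i, μ ≤ hT.eigenvalues i := fun i => Finset.inf'_le _ (Finset.mem_univ i)
  have hlow := quad_lower_bound hT hc
  have hx0 : 0 ≤ x₀ ⬝ᵥ x₀ := Finset.sum_nonneg fun i _ => mul_self_nonneg _
  have hμ : μ < 0 := by nlinarith [hlow x₀]
  have hμ0 : μ ≠ 0 := ne_of_lt hμ
  have htpos : (0:ℝ) < -μ⁻¹ := neg_pos.mpr (inv_lt_zero.mpr hμ)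
  have hTt : Tᵀ = T := by ext i j; simpa using hT.apply i j
  refine ⟨-μ⁻¹, htpos, ?_, ?_⟩
  · refine Matrix.PosSemidef.of_dotProduct_mulVec_nonneg ?_ ?_
    · show (1 + -μ⁻¹ • T)ᴴ = 1 + -μ⁻¹ • T
      simp [conjTranspose_add, conjTranspose_smul, hTt]
    · intro x
      have hx : star x = x := by
        funext i; simp
      rw [hx]
      have hexp : x ⬝ᵥ ((1 + -μ⁻¹ • T) *ᵥ x) = x ⬝ᵥ x + -μ⁻¹ * (x ⬝ᵥ (T *ᵥ x)) := by
        rw [add_mulVec, one_mulVec, dotProduct_add, smul_mulVec, dotProduct_smul]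
        simp
      rw [hexp]
      have h1 := hlow x
      have hxx : 0 ≤ x ⬝ᵥ x := Finset.sum_nonneg fun i _ => mul_self_nonneg _
      have hinv : μ * μ⁻¹ = 1 := mul_inv_cancel₀ (ne_of_lt hμ)
      nlinarith [mul_le_mul_of_nonneg_left h1 (le_of_lt htpos)]
  · obtain ⟨i, _, hμi⟩ := Finset.exists_mem_eq_inf' hne hT.eigenvalues
    set v : Fin r → ℝ := ⇑(hT.eigenvectorBasis i) with hv
    have hvne : v ≠ 0 := by
      have := hT.eigenvectorBasis.orthonormal.ne_zero i
      intro h; apply this; ext j; exact congrFun h j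
    have hTv : T *ᵥ v = μ • v := by
      rw [hv, hT.mulVec_eigenvectorBasis, ← hμi]
    have hker : (1 + -μ⁻¹ • T) *ᵥ v = 0 := by
      rw [add_mulVec, one_mulVec, smul_mulVec, hTv, smul_smul]
      have h1 : -μ⁻¹ * μ = -1 := by field_simp
      rw [h1]
      funext j
      simp
    have hkermem : v ∈ LinearMap.ker (1 + -μ⁻¹ • T).mulVecLin := by
      rw [LinearMap.mem_ker, Matrix.mulVecLin_apply]
      exact hker
    have hkerpos : 0 < Module.finrank ℝ (LinearMap.ker (1 + -μ⁻¹ • T).mulVecLin) := by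
      rw [Module.finrank_pos_iff_exists_ne_zero]
      exact ⟨⟨v, hkermem⟩, by simp [hvne, Submodule.mk_eq_zero]⟩
    have hrn := LinearMap.finrank_range_add_finrank_ker (1 + -μ⁻¹ • T).mulVecLin
    rw [Module.finrank_fintype_fun_eq_card, Fintype.card_fin] at hrn
    have : (1 + -μ⁻¹ • T).rank = Module.finrank ℝ (LinearMap.range (1 + -μ⁻¹ • T).mulVecLin) := rfl
    omega



lemma conjT_eq_transpose {m r : ℕ} (V : Matrix (Fin m) (Fin r) ℝ) : Vᴴ = Vᵀ := by
  ext i j; simp [conjTranspose_apply]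

lemma psd_decomp {m : ℕ} {M : Matrix (Fin m) (Fin m) ℝ} (hM : M.PosSemidef) :
    ∃ V : Matrix (Fin m) (Fin M.rank) ℝ, M = V * Vᵀ := by
  classical
  have hH := hM.1
  set lam := hH.eigenvalues with hlam
  have hcard : Fintype.card {i // lam i ≠ 0} = M.rank := hH.rank_eq_card_non_zero_eigs.symm
  let e : Fin M.rank ≃ {i // lam i ≠ 0} := (Fintype.equivFinOfCardEq hcard).symm
  set U : Matrix (Fin m) (Fin m) ℝ := (hH.eigenvectorUnitary : Matrix (Fin m) (Fin m) ℝ) with hU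
  refine ⟨Matrix.of fun k j => U k (e j) * Real.sqrt (lam (e j)), ?_⟩
  have hspec : M = U * diagonal lam * Uᵀ := by
    have h0 : diagonal (RCLike.ofReal ∘ lam) = diagonal lam := by congr 1
    rw [← conjT_eq_transpose, ← h0]
    exact hH.spectral_theorem
  ext k l
  rw [Matrix.mul_apply]
  have hterm : ∀ j : Fin M.rank,
      (Matrix.of fun k j => U k (e j) * Real.sqrt (lam (e j))) k j *
        (Matrix.of fun k j => U k (e j) * Real.sqrt (lam (e j)))ᵀ j l
      = U k (e j) * lam (e j) * U l (e j) := by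
    intro j
    have : Real.sqrt (lam (e j)) * Real.sqrt (lam (e j)) = lam (e j) :=
      Real.mul_self_sqrt (hM.eigenvalues_nonneg (e j))
    simp only [Matrix.transpose_apply, Matrix.of_apply]
    ring_nf
    rw [Real.sq_sqrt (hM.eigenvalues_nonneg (e j))]
    ring
  rw [Finset.sum_congr rfl fun j _ => hterm j]
  have h1 : ∑ j : Fin M.rank, U k (e j) * lam (e j) * U l (e j)
      = ∑ s : {i // lam i ≠ 0}, U k s * lam s * U l s :=
    Equiv.sum_comp e (fun s => U k s * lam s * U l s)
  have h2 : ∑ s : {i // lam i ≠ 0}, U k s * lam s * U l s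
      = ∑ i ∈ Finset.univ.filter (fun i => lam i ≠ 0), U k i * lam i * U l i :=
    (Finset.sum_subtype (p := fun i => lam i ≠ 0)
      (Finset.univ.filter fun i => lam i ≠ 0) (fun x => by simp) (fun i => U k i * lam i * U l i)).symm
  have h3 : ∑ i ∈ Finset.univ.filter (fun i => lam i ≠ 0), U k i * lam i * U l i
      = ∑ i, U k i * lam i * U l i :=
    Finset.sum_filter_of_ne (by intro x _ hx; intro h; apply hx; rw [h]; ring)
  rw [h1, h2, h3, hspec]
  rw [Matrix.mul_apply]
  refine Finset.sum_congr rfl fun i _ => ?_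
  rw [Matrix.mul_diagonal, Matrix.transpose_apply]

noncomputable def symMat {r : ℕ} (c : Sym2 (Fin r) → ℝ) : Matrix (Fin r) (Fin r) ℝ :=
  Matrix.of fun a b => c (Sym2.mk a b)

lemma symMat_transpose {r : ℕ} (c : Sym2 (Fin r) → ℝ) : (symMat c)ᵀ = symMat c := by
  ext a b
  simp only [Matrix.transpose_apply, symMat, Matrix.of_apply]
  rw [Sym2.eq_swap]

lemma symMat_inj {r : ℕ} {c c' : Sym2 (Fin r) → ℝ} (h : symMat c = symMat c') : c = c' := by
  funext z
  induction z using Sym2.ind with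
  | _ a b => exact congrFun (congrFun h a) b

lemma symMat_add {r : ℕ} (c c' : Sym2 (Fin r) → ℝ) :
    symMat (c + c') = symMat c + symMat c' := by
  ext a b; simp [symMat]

lemma symMat_smul {r : ℕ} (t : ℝ) (c : Sym2 (Fin r) → ℝ) :
    symMat (t • c) = t • symMat c := by
  ext a b; simp [symMat]

lemma exists_nonzero_symm_ker {r d : ℕ} (hd : 2 * d < r * (r + 1))
    (f : Matrix (Fin r) (Fin r) ℝ → (Fin d → ℝ))
    (hadd : ∀ X Y, f (X + Y) = f X + f Y) (hsmul : ∀ (t : ℝ) X, f (t • X) = t • f X) :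
    ∃ S : Matrix (Fin r) (Fin r) ℝ, S ≠ 0 ∧ Sᵀ = S ∧ f S = 0 := by
  classical
  let Φ : (Sym2 (Fin r) → ℝ) →ₗ[ℝ] (Fin d → ℝ) :=
    { toFun := fun c => f (symMat c)
      map_add' := fun c c' => by
        show f (symMat (c + c')) = f (symMat c) + f (symMat c')
        rw [symMat_add, hadd]
      map_smul' := fun t c => by
        show f (symMat (t • c)) = t • f (symMat c)
        rw [symMat_smul, hsmul] }
  have hcard : d < Fintype.card (Sym2 (Fin r)) := by
    rw [Sym2.card, Fintype.card_fin, Nat.choose_two_right]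
    have heven : 2 ∣ (r + 1) * r := by
      rw [mul_comm]
      exact (Nat.even_mul_succ_self r).two_dvd
    rw [Nat.add_sub_cancel, Nat.lt_div_iff_mul_lt' heven, Nat.mul_comm (r + 1) r]
    exact hd
  have hnotinj : ¬ Function.Injective Φ := by
    intro hinj
    have := LinearMap.finrank_le_finrank_of_injective hinj
    rw [Module.finrank_fintype_fun_eq_card, Module.finrank_fintype_fun_eq_card,
      Fintype.card_fin] at this
    omega
  have hker : ∃ c : Sym2 (Fin r) → ℝ, c ≠ 0 ∧ Φ c = 0 := by
    by_contra hno
    push_neg at hno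
    apply hnotinj
    rw [← LinearMap.ker_eq_bot, Submodule.eq_bot_iff]
    intro c hc
    by_contra hc0
    exact (hno c hc0) hc
  obtain ⟨c, hc0, hcker⟩ := hker
  refine ⟨symMat c, ?_, symMat_transpose c, hcker⟩
  intro h
  apply hc0
  apply symMat_inj (c' := 0)
  rw [h]
  ext a b; simp [symMat]

lemma exists_quad_ne_zero {r : ℕ} {S : Matrix (Fin r) (Fin r) ℝ} (hsym : Sᵀ = S) (h0 : S ≠ 0) :
    ∃ x : Fin r → ℝ, x ⬝ᵥ (S *ᵥ x) ≠ 0 := by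
  by_contra hall
  push_neg at hall
  apply h0
  have key : ∀ a b : Fin r, Pi.single a (1:ℝ) ⬝ᵥ (S *ᵥ Pi.single b (1:ℝ)) = S a b := by
    intro a b
    simp [dotProduct, mulVec, Pi.single_apply, Finset.sum_ite_eq', mul_ite]
  ext a b
  have haa := hall (Pi.single a 1)
  have hbb := hall (Pi.single b 1)
  have hab := hall (Pi.single a 1 + Pi.single b 1)
  rw [mulVec_add, dotProduct_add, add_dotProduct, add_dotProduct] at hab
  rw [key] at haa hbb
  rw [key, key, key, key] at hab
  have hsba : S b a = S a b := congrFun (congrFun hsym a) b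
  simp only [Matrix.zero_apply]
  linarith

lemma reduce {n : ℕ} (A : Matrix (Fin (n + 1)) (Fin (n + 1)) ℝ) (p : Fin (n + 1) → ℝ)
    {M : Matrix (Fin (n + 1)) (Fin (n + 1)) ℝ} (hM : Feasible A p M)
    (hbig : 2 * (n + 1) < M.rank * (M.rank + 1)) :
    ∃ M', Feasible A p M' ∧ (∀ i, ip (sdpMat A i) M' = ip (sdpMat A i) M) ∧
      M'.rank < M.rank := by
  obtain ⟨V, hMV⟩ := psd_decomp hM.1
  set f : Matrix (Fin M.rank) (Fin M.rank) ℝ → (Fin (n + 1) → ℝ) :=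
    fun S i => ip (sdpMat A i) (V * S * Vᵀ) with hf
  have hadd : ∀ X Y, f (X + Y) = f X + f Y := by
    intro X Y
    funext i
    simp only [hf, Pi.add_apply]
    rw [Matrix.mul_add, Matrix.add_mul, ip_add_right]
  have hsmul : ∀ (t : ℝ) X, f (t • X) = t • f X := by
    intro t X
    funext i
    simp only [hf, Pi.smul_apply, smul_eq_mul]
    rw [Matrix.mul_smul, Matrix.smul_mul, ip_smul_right]
  obtain ⟨S, hS0, hSsym, hfS⟩ := exists_nonzero_symm_ker hbig f hadd hsmul
  obtain ⟨x₀, hx₀⟩ := exists_quad_ne_zero hSsym hS0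
  -- choose the sign so that the quadratic form is negative somewhere
  obtain ⟨T, hTsym, hTconstr, x₁, hneg⟩ :
      ∃ T : Matrix (Fin M.rank) (Fin M.rank) ℝ, Tᵀ = T ∧
        (∀ i, ip (sdpMat A i) (V * T * Vᵀ) = 0) ∧ ∃ x, x ⬝ᵥ (T *ᵥ x) < 0 := by
    rcases lt_or_gt_of_ne hx₀ with h | h
    · exact ⟨S, hSsym, fun i => congrFun hfS i, x₀, h⟩
    · refine ⟨-S, by rw [Matrix.transpose_neg, hSsym], fun i => ?_, x₀, ?_⟩
      · rw [Matrix.mul_neg, Matrix.neg_mul, ip_neg_right]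
        rw [show ip (sdpMat A i) (V * S * Vᵀ) = 0 from congrFun hfS i]
        ring
      · rw [neg_mulVec, dotProduct_neg]
        linarith
  have hTH : T.IsHermitian := by
    show Tᴴ = T
    ext i j
    simpa [conjTranspose_apply] using congrFun (congrFun hTsym i) j
  obtain ⟨t, ht, hPSD, hrk⟩ := perturb hTH hneg
  refine ⟨V * (1 + t • T) * Vᵀ, ?_, ?_, ?_⟩
  · constructor
    · have := hPSD.mul_mul_conjTranspose_same V
      rwa [conjT_eq_transpose] at this
    · intro i hi
      have hexp : V * (1 + t • T) * Vᵀ = M + t • (V * T * Vᵀ) := by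
        rw [Matrix.mul_add, Matrix.mul_one, Matrix.add_mul, Matrix.mul_smul,
          Matrix.smul_mul, ← hMV]
      rw [hexp, ip_add_right, ip_smul_right, hTconstr i]
      rw [hM.2 i hi]
      ring
  · intro i
    have hexp : V * (1 + t • T) * Vᵀ = M + t • (V * T * Vᵀ) := by
      rw [Matrix.mul_add, Matrix.mul_one, Matrix.add_mul, Matrix.mul_smul,
        Matrix.smul_mul, ← hMV]
    rw [hexp, ip_add_right, ip_smul_right, hTconstr i]
    ring
  · calc (V * (1 + t • T) * Vᵀ).rank ≤ ((1 + t • T) * Vᵀ).rank := by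
          rw [Matrix.mul_assoc]
          exact Matrix.rank_mul_le_right V ((1 + t • T) * Vᵀ)
      _ ≤ (1 + t • T).rank := Matrix.rank_mul_le_left (1 + t • T) Vᵀ
      _ < M.rank := hrk



lemma dot_single {m : ℕ} (M : Matrix (Fin m) (Fin m) ℝ) (a b : Fin m) :
    Pi.single a (1:ℝ) ⬝ᵥ (M *ᵥ Pi.single b (1:ℝ)) = M a b := by
  simp [dotProduct, mulVec, Pi.single_apply, Finset.sum_ite_eq', mul_ite]

lemma star_vec {m : ℕ} (x : Fin m → ℝ) : star x = x := by
  funext i; simp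

lemma row_quad {m : ℕ} (C B : Matrix (Fin m) (Fin m) ℝ) (k : Fin m) :
    (C * B * Cᵀ) k k = (C k) ⬝ᵥ (B *ᵥ (C k)) := by
  simp only [Matrix.mul_apply, Matrix.transpose_apply, dotProduct, mulVec,
    Finset.sum_mul, Finset.mul_sum]
  rw [Finset.sum_comm]
  exact Finset.sum_congr rfl fun x _ => Finset.sum_congr rfl fun j _ => by ring

lemma ip_lower_bound {m : ℕ} {B : Matrix (Fin m) (Fin m) ℝ} (hB : B.PosDef) :
    ∃ ε : ℝ, 0 < ε ∧ ∀ M : Matrix (Fin m) (Fin m) ℝ, M.PosSemidef → ε * M.trace ≤ ip B M := by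
  rcases Nat.eq_zero_or_pos m with hm | hm
  · subst hm
    exact ⟨1, one_pos, fun M _ => by simp [ip, Matrix.trace]⟩
  · haveI : Nonempty (Fin m) := Fin.pos_iff_nonempty.mp hm
    have hne : (Finset.univ : Finset (Fin m)).Nonempty := Finset.univ_nonempty
    set ε := Finset.univ.inf' hne hB.1.eigenvalues with hε
    have hc : ∀ i, ε ≤ hB.1.eigenvalues i := fun i => Finset.inf'_le _ (Finset.mem_univ i)
    obtain ⟨i0, _, hi0⟩ := Finset.exists_mem_eq_inf' hne hB.1.eigenvalues
    have hεpos : 0 < ε := by rw [hε, hi0]; exact hB.eigenvalues_pos i0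
    refine ⟨ε, hεpos, fun M hM => ?_⟩
    open scoped MatrixOrder Matrix.Norms.L2Operator in
    obtain ⟨C, hC⟩ := CStarAlgebra.nonneg_iff_eq_star_mul_self.mp hM.nonneg
    rw [Matrix.star_eq_conjTranspose, conjT_eq_transpose] at hC
    have htr1 : ip B M = ∑ k, (C k) ⬝ᵥ (B *ᵥ (C k)) := by
      rw [ip, hC, show B * (Cᵀ * C) = (B * Cᵀ) * C by rw [Matrix.mul_assoc],
        Matrix.trace_mul_comm, show C * (B * Cᵀ) = C * B * Cᵀ by rw [Matrix.mul_assoc]]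
      rw [Matrix.trace]
      exact Finset.sum_congr rfl fun k _ => row_quad C B k
    have htr2 : M.trace = ∑ k, (C k) ⬝ᵥ (C k) := by
      rw [hC, Matrix.trace]
      simp only [Matrix.diag_apply, Matrix.mul_apply, Matrix.transpose_apply, dotProduct]
      rw [Finset.sum_comm]
    rw [htr1, htr2, Finset.mul_sum]
    exact Finset.sum_le_sum fun k _ => quad_lower_bound hB.1 hc (C k)

lemma psd_entry_le_trace {m : ℕ} {M : Matrix (Fin m) (Fin m) ℝ} (hM : M.PosSemidef)
    (k l : Fin m) : |M k l| ≤ M.trace := by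
  have hq : ∀ x : Fin m → ℝ, 0 ≤ x ⬝ᵥ (M *ᵥ x) := by
    intro x
    have := hM.dotProduct_mulVec_nonneg x
    rwa [_root_.star_vec] at this
  have hd : ∀ a, 0 ≤ M a a := fun a => by
    have := hq (Pi.single a 1); rwa [dot_single] at this
  have htr : ∀ a, M a a ≤ M.trace := fun a =>
    Finset.single_le_sum (fun b _ => hd b) (Finset.mem_univ a)
  have hsym : M l k = M k l := by
    have := congrFun (congrFun hM.1 k) l
    simpa [conjTranspose_apply] using this
  have h1 := hq (Pi.single k 1 + Pi.single l 1)
  have h2 := hq (Pi.single k 1 - Pi.single l 1)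
  rw [mulVec_add, dotProduct_add, add_dotProduct, add_dotProduct, dot_single, dot_single,
    dot_single, dot_single] at h1
  rw [mulVec_sub, dotProduct_sub, sub_dotProduct, sub_dotProduct, dot_single, dot_single,
    dot_single, dot_single] at h2
  rw [abs_le]
  constructor <;> [nlinarith [htr k, htr l, hd k, hd l]; nlinarith [htr k, htr l, hd k, hd l]]

section Topology

variable {m : ℕ}

lemma cont_entry (k l : Fin m) :
    Continuous fun M : Matrix (Fin m) (Fin m) ℝ => M k l :=
  (continuous_apply l).comp (continuous_apply k)

lemma cont_ip (X : Matrix (Fin m) (Fin m) ℝ) :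
    Continuous fun M : Matrix (Fin m) (Fin m) ℝ => ip X M := by
  have : (fun M : Matrix (Fin m) (Fin m) ℝ => ip X M)
      = fun M => ∑ k, ∑ l, X k l * M l k := by
    funext M; exact ip_eq_sum X M
  rw [this]
  exact continuous_finset_sum _ fun k _ =>
    continuous_finset_sum _ fun l _ => (continuous_const.mul (cont_entry l k))

lemma isClosed_posSemidef :
    IsClosed {M : Matrix (Fin m) (Fin m) ℝ | M.PosSemidef} := by
  have heq : {M : Matrix (Fin m) (Fin m) ℝ | M.PosSemidef} =
      (⋂ k, ⋂ l, {M : Matrix (Fin m) (Fin m) ℝ | M l k = M k l}) ∩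
      (⋂ x : Fin m → ℝ, {M : Matrix (Fin m) (Fin m) ℝ | 0 ≤ x ⬝ᵥ (M *ᵥ x)}) := by
    ext M
    simp only [Set.mem_setOf_eq, Set.mem_inter_iff, Set.mem_iInter]
    constructor
    · intro hM
      refine ⟨fun k l => ?_, fun x => ?_⟩
      · simpa [conjTranspose_apply] using congrFun (congrFun hM.1 k) l
      · have := hM.dotProduct_mulVec_nonneg x; rwa [_root_.star_vec] at this
    · intro ⟨h1, h2⟩
      refine Matrix.PosSemidef.of_dotProduct_mulVec_nonneg ?_ ?_
      · ext k l
        simpa [conjTranspose_apply] using (h1 l k).symm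
      · intro x
        rw [_root_.star_vec]
        exact h2 x
  rw [heq]
  apply IsClosed.inter
  · exact isClosed_iInter fun k => isClosed_iInter fun l =>
      isClosed_eq (cont_entry l k) (cont_entry k l)
  · refine isClosed_iInter fun x => ?_
    have hc : Continuous fun M : Matrix (Fin m) (Fin m) ℝ => x ⬝ᵥ (M *ᵥ x) := by
      have : (fun M : Matrix (Fin m) (Fin m) ℝ => x ⬝ᵥ (M *ᵥ x))
          = fun M => ∑ i, ∑ j, x i * (M i j * x j) := by
        funext M
        simp [dotProduct, mulVec, Finset.mul_sum]
      rw [this]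
      exact continuous_finset_sum _ fun i _ => continuous_finset_sum _ fun j _ =>
        (continuous_const.mul ((cont_entry i j).mul continuous_const))
    exact isClosed_le continuous_const hc

end Topology

lemma isClosed_feasible {n : ℕ} (A : Matrix (Fin (n + 1)) (Fin (n + 1)) ℝ)
    (p : Fin (n + 1) → ℝ) : IsClosed {M | Feasible A p M} := by
  classical
  have heq : {M | Feasible A p M} =
      {M : Matrix (Fin (n + 1)) (Fin (n + 1)) ℝ | M.PosSemidef} ∩
      ⋂ i : Fin (n + 1), (if i = Fin.last n then Set.univ
        else {M | ip (sdpMat A i) M = -(p i)}) := by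
    ext M
    simp only [Set.mem_setOf_eq, Set.mem_inter_iff, Set.mem_iInter, Feasible]
    constructor
    · rintro ⟨h1, h2⟩
      refine ⟨h1, fun i => ?_⟩
      by_cases hi : i = Fin.last n
      · simp [hi]
      · simp only [if_neg hi, Set.mem_setOf_eq]
        exact h2 i hi
    · rintro ⟨h1, h2⟩
      refine ⟨h1, fun i hi => ?_⟩
      have := h2 i
      rwa [if_neg hi] at this
  rw [heq]
  refine IsClosed.inter isClosed_posSemidef (isClosed_iInter fun i => ?_)
  by_cases hi : i = Fin.last n
  · simp [hi]
  · rw [if_neg hi]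
    exact isClosed_eq (cont_ip _) continuous_const

lemma exists_optimal {n : ℕ} (A : Matrix (Fin (n + 1)) (Fin (n + 1)) ℝ)
    (hA : (-(A + Aᵀ)).PosDef)
    (p : Fin (n + 1) → ℝ) (hp : ∀ i : Fin (n + 1), i ≠ Fin.last n → 0 ≤ p i) :
    ∃ M₁, Feasible A p M₁ ∧
      ∀ M, Feasible A p M →
        ip (-(A + Aᵀ)) M₁ ≤ ip (-(A + Aᵀ)) M := by
  classical
  set B := -(A + Aᵀ) with hB
  -- the diagonal feasible point
  have hAii : ∀ i : Fin (n + 1), A i i < 0 := by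
    intro i
    have h := hA.dotProduct_mulVec_pos (x := Pi.single i (1:ℝ)) (by
      intro h
      have := congrFun h i
      simp [Pi.single_apply] at this)
    rw [_root_.star_vec, dot_single] at h
    simp only [hB, Matrix.neg_apply, Matrix.add_apply, Matrix.transpose_apply] at h
    linarith
  set d : Fin (n + 1) → ℝ := fun i => if i = Fin.last n then 0 else p i / (-(2 * A i i)) with hd
  have hdnn : ∀ i, 0 ≤ d i := by
    intro i
    by_cases hi : i = Fin.last n
    · simp [hd, hi]
    · show (0:ℝ) ≤ if i = Fin.last n then 0 else p i / -(2 * A i i)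
      rw [if_neg hi]
      apply div_nonneg (hp i hi)
      have := hAii i
      linarith
  set Md : Matrix (Fin (n + 1)) (Fin (n + 1)) ℝ := Matrix.diagonal d with hMd
  have hMdpsd : Md.PosSemidef := Matrix.PosSemidef.diagonal hdnn
  have hMdsymm : Mdᵀ = Md := Matrix.diagonal_transpose d
  have hMdfeas : Feasible A p Md := by
    refine ⟨hMdpsd, fun i hi => ?_⟩
    rw [ip_sdpMat_symm A i hMdsymm]
    have : ∀ l, A i l * Md l i = if l = i then A i i * d i else 0 := by
      intro l
      by_cases hl : l = i
      · rw [if_pos hl, hl, show Md i i = d i from Matrix.diagonal_apply_eq d i]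
      · rw [if_neg hl, show Md l i = 0 from Matrix.diagonal_apply_ne d hl, mul_zero]
    rw [Finset.sum_congr rfl fun l _ => this l, Finset.sum_ite_eq' Finset.univ i]
    simp only [Finset.mem_univ, if_true]
    show 2 * (A i i * if i = Fin.last n then 0 else p i / -(2 * A i i)) = -p i
    rw [if_neg hi]
    have hne : A i i ≠ 0 := ne_of_lt (hAii i)
    field_simp
  obtain ⟨ε, hε, hεbound⟩ := ip_lower_bound hA
  set c := ip B Md with hc
  set K := {M | Feasible A p M ∧ ip B M ≤ c} with hK
  have hMdK : Md ∈ K := ⟨hMdfeas, le_refl _⟩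
  set R := c / ε with hR
  have hKsub : K ⊆ Set.pi Set.univ (fun _ : Fin (n + 1) =>
      Set.pi Set.univ (fun _ : Fin (n + 1) => Set.Icc (-R) R)) := by
    intro M hM
    have htr : M.trace ≤ R := by
      rw [hR, le_div_iff₀ hε]
      calc M.trace * ε = ε * M.trace := by ring
        _ ≤ ip B M := hεbound M hM.1.1
        _ ≤ c := hM.2
    intro k _
    intro l _
    have := psd_entry_le_trace hM.1.1 k l
    have habs : |M k l| ≤ R := le_trans this htr
    rw [abs_le] at habs
    exact ⟨habs.1, habs.2⟩
  have hKcompact : IsCompact K := by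
    refine IsCompact.of_isClosed_subset ?_ ?_ hKsub
    · exact isCompact_univ_pi fun _ => isCompact_univ_pi fun _ => isCompact_Icc
    · exact IsClosed.inter (isClosed_feasible A p) (isClosed_le (cont_ip B) continuous_const)
  obtain ⟨M₁, hM₁K, hM₁min⟩ := hKcompact.exists_isMinOn ⟨Md, hMdK⟩ ((cont_ip B).continuousOn)
  refine ⟨M₁, hM₁K.1, fun M hM => ?_⟩
  by_cases hMK : M ∈ K
  · exact hM₁min hMK
  · have : ¬ (ip B M ≤ c) := fun h => hMK ⟨hM, h⟩
    push_neg at this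
    calc ip B M₁ ≤ c := hM₁K.2
      _ ≤ ip B M := le_of_lt this

lemma ip_neg_left {m : ℕ} (X M : Matrix (Fin m) (Fin m) ℝ) :
    ip (-X) M = -(ip X M) := by
  rw [ip, ip, Matrix.neg_mul, Matrix.trace_neg]

lemma psd_symm {m : ℕ} {M : Matrix (Fin m) (Fin m) ℝ} (hM : M.PosSemidef) : Mᵀ = M := by
  ext k l
  simpa [conjTranspose_apply] using congrFun (congrFun hM.1 k) l

lemma obj_identity {n : ℕ} (A : Matrix (Fin (n + 1)) (Fin (n + 1)) ℝ)
    (p : Fin (n + 1) → ℝ) {M : Matrix (Fin (n + 1)) (Fin (n + 1)) ℝ}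
    (hM : Feasible A p M) :
    ip (sdpMat A (Fin.last n)) M
      = (∑ i ∈ Finset.univ.erase (Fin.last n), p i) - ip (-(A + Aᵀ)) M := by
  have hsymm : Mᵀ = M := psd_symm hM.1
  have hsum := sum_ip_sdpMat A hsymm
  have hsplit : ∑ i, ip (sdpMat A i) M
      = ip (sdpMat A (Fin.last n)) M + ∑ i ∈ Finset.univ.erase (Fin.last n), ip (sdpMat A i) M :=
    (Finset.add_sum_erase _ _ (Finset.mem_univ _)).symm
  have herase : ∑ i ∈ Finset.univ.erase (Fin.last n), ip (sdpMat A i) M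
      = ∑ i ∈ Finset.univ.erase (Fin.last n), -(p i) :=
    Finset.sum_congr rfl fun i hi => hM.2 i (Finset.ne_of_mem_erase hi)
  have hipneg : ip (-(A + Aᵀ)) M = -(ip (A + Aᵀ) M) := ip_neg_left _ _
  rw [hipneg, Finset.sum_neg_distrib] at *
  linarith [hsum, hsplit, herase]

/-- If `A + Aᵀ` is negative definite, the associated semidefinite program (in dimension
`n + 1`) has an optimal solution of rank at most `⌊(√(8(n+1)+1) − 1)/2⌋`. -/
theorem sdp_has_low_rank_optimal_solution (n : ℕ)
    (A : Matrix (Fin (n + 1)) (Fin (n + 1)) ℝ)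
    (hA : (-(A + Aᵀ)).PosDef)
    (p : Fin (n + 1) → ℝ) (hp : ∀ i : Fin (n + 1), i ≠ Fin.last n → 0 ≤ p i) :
    ∃ M₀, Feasible A p M₀ ∧
      M₀.rank ≤ ⌊(Real.sqrt (8 * (n + 1) + 1) - 1) / 2⌋₊ ∧
      ∀ M, Feasible A p M →
        ip (sdpMat A (Fin.last n)) M ≤ ip (sdpMat A (Fin.last n)) M₀ := by
  obtain ⟨M₁, hM₁f, hM₁opt⟩ := exists_optimal A hA p hp
  set B := -(A + Aᵀ) with hB
  set ranks : Set ℕ := {r | ∃ M, (Feasible A p M ∧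
    ∀ M', Feasible A p M' → ip B M ≤ ip B M') ∧ M.rank = r} with hranks
  have hrne : ranks.Nonempty := ⟨M₁.rank, M₁, ⟨hM₁f, hM₁opt⟩, rfl⟩
  obtain ⟨M₀, ⟨hM₀f, hM₀opt⟩, hM₀r⟩ := Nat.sInf_mem hrne
  have hbound : M₀.rank * (M₀.rank + 1) ≤ 2 * (n + 1) := by
    by_contra hgt
    push_neg at hgt
    obtain ⟨M', hM'f, hM'ip, hM'rank⟩ := reduce A p hM₀f hgt
    have hipeq : ip B M' = ip B M₀ := by
      have h1 : ip (A + Aᵀ) M' = ip (A + Aᵀ) M₀ := by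
        rw [← sum_ip_sdpMat A (psd_symm hM'f.1), ← sum_ip_sdpMat A (psd_symm hM₀f.1)]
        exact Finset.sum_congr rfl fun i _ => hM'ip i
      have h2 : ∀ N : Matrix (Fin (n+1)) (Fin (n+1)) ℝ, ip B N = -(ip (A + Aᵀ) N) := by
        intro N; rw [hB]; exact ip_neg_left _ _
      rw [h2, h2, h1]
    have hmem : M'.rank ∈ ranks :=
      ⟨M', ⟨hM'f, fun M'' h => by rw [hipeq]; exact hM₀opt M'' h⟩, rfl⟩
    have := Nat.sInf_le hmem
    omega
  refine ⟨M₀, hM₀f, ?_, ?_⟩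
  · apply Nat.le_floor
    have hsq : ((2 * M₀.rank + 1 : ℕ) : ℝ) ≤ Real.sqrt (8 * (n + 1) + 1) := by
      rw [Real.le_sqrt (by positivity) (by positivity)]
      have : (M₀.rank * (M₀.rank + 1) : ℝ) ≤ 2 * (n + 1) := by exact_mod_cast hbound
      push_cast
      nlinarith
    push_cast at hsq ⊢
    linarith
  · intro M hMfeas
    rw [obj_identity A p hMfeas, obj_identity A p hM₀f]
    have := hM₀opt M hMfeas
    linarith
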